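/- Let t be an integer. (1) If k ∣ q−1, then M_{k,t}(1,1) = (k : F_{q²}), M_{k,t}(i, k+2−i) = (k : F_{q²})·γ^{t((i−1)+(k+1−i)q)} for each 2 ≤ i ≤ k, and all other entries of M_{k,t} are 0. (2) If k ∣ q+1, then M_{k,t} is a diagonal matrix with M_{k,t}(i,i) = (k : F_{q²})·γ^{t(i−1)(1+q)} for each 1 ≤ i ≤ k. -/
import Mathlib


/-- explicit description of `M_{k,t}`.
(1) If `k ∣ q - 1`, then `M(1,1) = k`, the `(i, k+2-i)` entry (for `2 ≤ i ≤ k`, here written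
with 0-based indices as the `(r, k-r)` entry for `1 ≤ r ≤ k-1`) equals
`k·γ^{t((i-1)+(k+1-i)q)}`, and all other entries (i.e. those with `(r+s) % k ≠ 0` in 0-based
indexing) vanish.
(2) If `k ∣ q + 1`, then `M` is diagonal with `M(i,i) = k·γ^{t(i-1)(1+q)}`. -/
theorem stmt10 {F : Type} [Field F] [Fintype F]
    (q p m : ℕ) (hp : p.Prime) (hodd : Odd p) (hm : 0 < m) (hq : q = p ^ m)
    (hcard : Fintype.card F = q ^ 2)
    (γ : Fˣ) (hγ : ∀ x : Fˣ, x ∈ Subgroup.zpowers γ)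
    (k : ℕ) (hk2 : 2 ≤ k) (hkdvd : k ∣ q ^ 2 - 1)
    (α : Fin k → F)
    (hα : ∀ i : Fin k, α i = (γ : F) ^ ((q ^ 2 - 1) / k * ((i : ℕ) + 1)))
    (t : ℤ) (M : Matrix (Fin k) (Fin k) F)
    (hM : ∀ r s : Fin k,
      M r s = ∑ i : Fin k, (((γ ^ t : Fˣ) : F) * α i) ^ ((r : ℕ) + (s : ℕ) * q)) :
    (k ∣ q - 1 →
        M ⟨0, by omega⟩ ⟨0, by omega⟩ = (k : F) ∧
        (∀ r : Fin k, ∀ _hr : 1 ≤ (r : ℕ),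
          M r ⟨k - (r : ℕ), by have := r.isLt; omega⟩ =
            (k : F) * ((γ ^ (t * (((r : ℕ) + (k - (r : ℕ)) * q : ℕ) : ℤ)) : Fˣ) : F)) ∧
        (∀ r s : Fin k, ((r : ℕ) + (s : ℕ)) % k ≠ 0 → M r s = 0)) ∧
      (k ∣ q + 1 →
        (∀ r : Fin k,
          M r r = (k : F) * ((γ ^ (t * ((r : ℕ) : ℤ) * ((1 + q : ℕ) : ℤ)) : Fˣ) : F)) ∧
        (∀ r s : Fin k, r ≠ s → M r s = 0)) := by
  have hq1 : 1 < q := by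
    subst hq
    calc 1 < p := hp.one_lt
    _ ≤ p ^ m := Nat.le_self_pow (by omega) p
  have hq4 : 4 ≤ q ^ 2 := by nlinarith
  have hq2 : k ≤ q ^ 2 - 1 := Nat.le_of_dvd (by omega) hkdvd
  have horder : orderOf γ = q ^ 2 - 1 := by
    rw [orderOf_eq_card_of_forall_mem_zpowers hγ, Nat.card_units,
      Nat.card_eq_fintype_card, hcard]
  set d := (q ^ 2 - 1) / k with hd
  have hdk : k * d = q ^ 2 - 1 := Nat.mul_div_cancel' hkdvd
  have hd0 : 0 < d := by nlinarith
  have hγ1 : γ ^ (q ^ 2 - 1) = 1 := by rw [← horder]; exact pow_orderOf_eq_one γ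
  have key : ∀ r s : Fin k, M r s =
      if k ∣ ((r : ℕ) + (s : ℕ) * q) then
        (k : F) * ((γ ^ (t * (((r : ℕ) + (s : ℕ) * q : ℕ) : ℤ)) : Fˣ) : F)
      else 0 := by
    intro r s
    set n := (r : ℕ) + (s : ℕ) * q with hn
    rw [hM]
    have hsum : ∀ i : Fin k, (((γ ^ t : Fˣ) : F) * α i) ^ n
        = ((γ ^ t : Fˣ) : F) ^ n * (((γ ^ (d * n) : Fˣ) : F)) ^ ((i : ℕ) + 1) := by
      intro i
      rw [mul_pow, hα]
      congr 1
      push_cast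
      rw [← pow_mul, ← pow_mul]
      congr 1
      ring
    rw [Finset.sum_congr rfl fun i _ => hsum i, ← Finset.mul_sum]
    by_cases hdvd : k ∣ n
    · obtain ⟨a, ha⟩ := hdvd
      have hz : (γ : Fˣ) ^ (d * n) = 1 := by
        rw [ha, show d * (k * a) = (q ^ 2 - 1) * a from by rw [← hdk]; ring,
          pow_mul, hγ1, one_pow]
      rw [hz]
      simp only [Units.val_one, one_pow, Finset.sum_const, Finset.card_univ,
        Fintype.card_fin, nsmul_eq_mul, mul_one]
      rw [if_pos ⟨a, ha⟩]
      have hc : ((γ ^ t : Fˣ) : F) ^ n = ((γ ^ (t * (n : ℤ)) : Fˣ) : F) := by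
        rw [← Units.val_pow_eq_pow_val, ← zpow_natCast (γ ^ t) n, ← zpow_mul]
      rw [hc, mul_comm]
    · have hz1 : ((γ ^ (d * n) : Fˣ) : F) ≠ 1 := by
        intro h
        have : (γ : Fˣ) ^ (d * n) = 1 := Units.ext (by simpa using h)
        have h2 : orderOf γ ∣ d * n := orderOf_dvd_of_pow_eq_one this
        rw [horder, ← hdk, mul_comm k d] at h2
        exact hdvd ((mul_dvd_mul_iff_left (by omega : d ≠ 0)).mp h2)
      have hzk : ((γ ^ (d * n) : Fˣ) : F) ^ k = 1 := by
        have : (γ : Fˣ) ^ (d * n * k) = 1 := by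
          rw [show d * n * k = (q ^ 2 - 1) * n from by rw [← hdk]; ring, pow_mul, hγ1, one_pow]
        calc ((γ ^ (d * n) : Fˣ) : F) ^ k = ((γ ^ (d * n * k) : Fˣ) : F) := by
              push_cast; rw [← pow_mul]
        _ = 1 := by rw [this]; rfl
      set z : F := ((γ ^ (d * n) : Fˣ) : F) with hzdef
      have hsum0 : ∑ i : Fin k, z ^ ((i : ℕ) + 1) = 0 := by
        have h1 : ∑ i : Fin k, z ^ ((i : ℕ) + 1) = z * ∑ i ∈ Finset.range k, z ^ i := by
          rw [Finset.mul_sum, Fin.sum_univ_eq_sum_range (fun i => z ^ (i + 1))]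
          exact Finset.sum_congr rfl fun i _ => by rw [pow_succ, mul_comm]
        have h2 : (∑ i ∈ Finset.range k, z ^ i) * (z - 1) = 0 := by
          rw [geom_sum_mul, hzk, sub_self]
        rcases mul_eq_zero.mp h2 with h | h
        · rw [h1, h, mul_zero]
        · exact absurd (sub_eq_zero.mp h) hz1
      rw [hsum0, mul_zero, if_neg hdvd]
  constructor
  · intro hdvd1
    obtain ⟨a, ha⟩ := hdvd1
    have hqa : q = k * a + 1 := by omega
    refine ⟨?_, ?_, ?_⟩
    · rw [key]
      simp
    · intro r hr
      rw [key]
      have hru : (r : ℕ) + (k - (r : ℕ)) = k := by have := r.isLt; omega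
      have hdv : k ∣ (r : ℕ) + (k - (r : ℕ)) * q := by
        refine ⟨1 + (k - (r : ℕ)) * a, ?_⟩
        calc (r : ℕ) + (k - (r : ℕ)) * q
            = ((r : ℕ) + (k - (r : ℕ))) + (k - (r : ℕ)) * a * k := by rw [hqa]; ring
          _ = k + (k - (r : ℕ)) * a * k := by rw [hru]
          _ = k * (1 + (k - (r : ℕ)) * a) := by ring
      rw [if_pos hdv]
    · intro r s hmod
      have hnd : ¬ k ∣ (r : ℕ) + (s : ℕ) * q := by
        intro hdv
        apply hmod
        have h2 : (r : ℕ) + (s : ℕ) * q = ((r : ℕ) + (s : ℕ)) + k * ((s : ℕ) * a) := by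
          rw [hqa]; ring
        have h3 : k ∣ (r : ℕ) + (s : ℕ) := by
          have h4 : k ∣ ((r : ℕ) + (s : ℕ) * q) - k * ((s : ℕ) * a) :=
            Nat.dvd_sub hdv (Dvd.intro _ rfl)
          rwa [h2, Nat.add_sub_cancel] at h4
        obtain ⟨c, hc⟩ := h3
        rw [hc, Nat.mul_mod_right]
      rw [key, if_neg hnd]
  · intro hdvd2
    obtain ⟨b, hb⟩ := hdvd2
    constructor
    · intro r
      rw [key]
      have hdv : k ∣ (r : ℕ) + (r : ℕ) * q := by
        refine ⟨(r : ℕ) * b, ?_⟩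
        calc (r : ℕ) + (r : ℕ) * q = (r : ℕ) * (q + 1) := by ring
          _ = (r : ℕ) * (k * b) := by rw [hb]
          _ = k * ((r : ℕ) * b) := by ring
      rw [if_pos hdv]
      have he : t * ((((r : ℕ) + (r : ℕ) * q : ℕ)) : ℤ)
          = t * ((r : ℕ) : ℤ) * ((1 + q : ℕ) : ℤ) := by push_cast; ring
      rw [he]
    · intro r s hne
      have hnd : ¬ k ∣ (r : ℕ) + (s : ℕ) * q := by
        intro hdv
        apply hne
        have h1 : (k : ℤ) ∣ (((r : ℕ) + (s : ℕ) * q : ℕ) : ℤ) := Int.natCast_dvd_natCast.mpr hdv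
        push_cast at h1
        have h2 : (k : ℤ) ∣ ((s : ℕ) : ℤ) * ((q : ℤ) + 1) := by
          refine Dvd.dvd.mul_left ?_ _
          have h2' : (k : ℤ) ∣ ((q + 1 : ℕ) : ℤ) := Int.natCast_dvd_natCast.mpr ⟨b, hb⟩
          push_cast at h2'
          exact h2'
        have h3 : (k : ℤ) ∣ ((r : ℕ) : ℤ) - ((s : ℕ) : ℤ) := by
          have h4 := dvd_sub h1 h2
          have h5 : ((r : ℕ) : ℤ) + ((s : ℕ) : ℤ) * q - ((s : ℕ) : ℤ) * ((q : ℤ) + 1)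
              = ((r : ℕ) : ℤ) - ((s : ℕ) : ℤ) := by ring
          rwa [h5] at h4
        have h6 : ((r : ℕ) : ℤ) - ((s : ℕ) : ℤ) = 0 := by
          refine Int.eq_zero_of_dvd_of_natAbs_lt_natAbs h3 ?_
          have hr := r.isLt
          have hs := s.isLt
          simp only [Int.natAbs_natCast]
          omega
        exact Fin.ext (by omega)
      rw [key, if_neg hnd]
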